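/- In a right Bol magma L with neutral element 1, suppose a·b = 1 and there exist distinct positive integers m, n with b^m = b^n. Then b·a = 1, so a and b are two-sided inverses of each other. -/

import Mathlib

/-- Magma powers: `a^0 = 1`, `a^(n+1) = a^n * a`. -/
def mpow {L : Type*} [Mul L] [One L] (a : L) : ℕ → L
  | 0 => 1
  | n + 1 => mpow a n * a

/-- Iterated right multiplication by `b`. -/
def rpow {L : Type*} [Mul L] (b : L) : ℕ → L → L
  | 0, x => x
  | k + 1, x => rpow b k x * b

theorem bol_torsion_two_sided {L : Type*} [Mul L] [One L]
    (hBol : ∀ x y z : L, ((x * y) * z) * y = x * ((y * z) * y))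
    (hone : ∀ x : L, 1 * x = x ∧ x * 1 = x)
    (a b : L) (hab : a * b = 1)
    (m n : ℕ) (hm : 0 < m) (hn : 0 < n) (hmn : m ≠ n)
    (hpow : mpow b m = mpow b n) :
    b * a = 1 := by
  -- mpow is rpow applied to 1
  have hm1 : ∀ k, mpow b k = rpow b k 1 := by
    intro k
    induction k with
    | zero => rfl
    | succ k ih => simp [mpow, rpow, ih]
  -- shift lemma
  have shift : ∀ k x, rpow b k (x * b) = rpow b (k + 1) x := by
    intro k
    induction k with
    | zero => intro x; rfl
    | succ k ih => intro x; simp only [rpow, ih]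
  -- main lemma: x * b^k = rpow b k x
  have main : ∀ k x, x * mpow b k = rpow b k x := by
    intro k
    induction k using Nat.strong_induction_on with
    | _ k ih =>
      match k with
      | 0 => intro x; exact (hone x).2
      | 1 => intro x; simp [mpow, rpow, (hone x).2, (hone b).1]
      | (n + 2) =>
        intro x
        have hbn : b * mpow b n = mpow b (n + 1) := by
          rw [ih n (by omega) b, hm1 (n + 1), ← shift n 1, (hone b).1]
        have hdecomp : mpow b (n + 2) = (b * mpow b n) * b := by
          rw [hbn]; rfl
        rw [hdecomp, ← hBol x b (mpow b n), ih n (by omega) (x * b), shift n x]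
        rfl
  -- a * b^(k+1) = b^k
  have hA : ∀ k, a * mpow b (k + 1) = mpow b k := by
    intro k
    rw [main (k + 1) a, ← shift k a, hab, ← hm1 k]
  -- descent: from b^p = b^q with p < q, get b^(q-p) = 1
  have key : ∀ p q : ℕ, p < q → mpow b p = mpow b q → mpow b (q - p) = 1 := by
    intro p
    induction p with
    | zero => intro q _ h; simpa [mpow] using h.symm
    | succ p ih =>
      intro q hpq h
      have hq : q = (q - 1) + 1 := by omega
      have h2 : mpow b p = mpow b (q - 1) := by
        have haq := hA (q - 1)
        rw [← hq] at haq
        rw [← hA p, h, haq]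
      have h3 := ih (q - 1) (by omega) h2
      have : q - 1 - p = q - (p + 1) := by omega
      rwa [this] at h3
  -- obtain d ≥ 1 with b^d = 1
  obtain ⟨d, hd, hbd⟩ : ∃ d, 0 < d ∧ mpow b d = 1 := by
    rcases lt_or_gt_of_ne hmn with h | h
    · exact ⟨n - m, by omega, key m n h hpow⟩
    · exact ⟨m - n, by omega, key n m h hpow.symm⟩
  -- a = b^(d-1)
  have ha : a = mpow b (d - 1) := by
    have hd1 : d = (d - 1) + 1 := by omega
    rw [← hA (d - 1), ← hd1, hbd, (hone a).2]
  -- conclude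
  have hd1 : d = (d - 1) + 1 := by omega
  have hfin : rpow b (d - 1) b = mpow b d := by
    conv_rhs => rw [hd1]
    rw [hm1, ← shift, (hone b).1]
  rw [ha, main (d - 1) b, hfin, hbd]
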